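/- (Eq. (28): entropic disturbance bound in the quantum autoencoder) In the quantum autoencoder setup with input ensemble L = {p_i, |p_i⟩⟨p_i|}_{i=1}^r, the entropic disturbance satisfies Δχ ≤ Σ_{i=1}^r p_i S(ρ_A^{(i)}) + ln( Σ_{i=1}^r e^{−C(ρ_A^{(i)}, ρ_A)} ), where ρ_A = Tr_B[U ρ_in U†] and ρ_A^{(i)} = Tr_B[U |p_i⟩⟨p_i| U†]. -/

import Mathlib

open scoped Kronecker BigOperators ComplexOrder

namespace QCE

variable {ι : Type*} [Fintype ι] [DecidableEq ι]

/-- Apply a real function to a matrix via the spectral decomposition (functional calculus on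
the eigenvalues); returns `0` if the matrix is not Hermitian. -/
noncomputable def matFun (A : Matrix ι ι ℂ) (f : ℝ → ℝ) : Matrix ι ι ℂ :=
  if h : A.IsHermitian then h.cfc f else 0

/-- Matrix logarithm taken on the support (eigenvalue `0` is sent to `0`,
since `Real.log 0 = 0`). -/
noncomputable def matLog (A : Matrix ι ι ℂ) : Matrix ι ι ℂ :=
  matFun A Real.log

/-- Quantum cross entropy `C(ρ₁, ρ₂) = -Tr[ρ₁ ln ρ₂]`, with the logarithm on the support. -/
noncomputable def crossEnt (ρ₁ ρ₂ : Matrix ι ι ℂ) : ℝ :=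
  -((ρ₁ * matLog ρ₂).trace.re)

/-- Von Neumann entropy `S(ρ) = -Tr[ρ ln ρ]`. -/
noncomputable def vnEntropy (ρ : Matrix ι ι ℂ) : ℝ :=
  crossEnt ρ ρ

/-- A density matrix: positive semidefinite with unit trace. -/
def IsDensityMatrix (ρ : Matrix ι ι ℂ) : Prop :=
  ρ.PosSemidef ∧ ρ.trace = 1

/-- The rank-one projector `|v⟩⟨v|`. -/
noncomputable def outer (v : ι → ℂ) : Matrix ι ι ℂ :=
  Matrix.vecMulVec v (star v)

/-- An orthonormal family of vectors. -/
def OrthonormalFam {r : ℕ} (v : Fin r → ι → ℂ) : Prop :=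
  ∀ i j, (∑ a, star (v i a) * v j a) = if i = j then (1 : ℂ) else 0

/-- The Choi matrix of a linear map on matrices. -/
noncomputable def choi {κ : Type*} [Fintype κ] [DecidableEq κ]
    (Φ : Matrix ι ι ℂ →ₗ[ℂ] Matrix κ κ ℂ) : Matrix (ι × κ) (ι × κ) ℂ :=
  ∑ i : ι, ∑ j : ι, (Matrix.single i j (1 : ℂ)) ⊗ₖ (Φ (Matrix.single i j 1))

/-- A quantum channel: completely positive (positive semidefinite Choi matrix, by Choi's
theorem) and trace preserving. -/
def IsCPTP {κ : Type*} [Fintype κ] [DecidableEq κ]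
    (Φ : Matrix ι ι ℂ →ₗ[ℂ] Matrix κ κ ℂ) : Prop :=
  (choi Φ).PosSemidef ∧ ∀ ρ : Matrix ι ι ℂ, (Φ ρ).trace = ρ.trace

/-- Partial trace over the second tensor factor. -/
noncomputable def ptraceB {dA dB : ℕ}
    (ρ : Matrix (Fin dA × Fin dB) (Fin dA × Fin dB) ℂ) : Matrix (Fin dA) (Fin dA) ℂ :=
  Matrix.of fun i j => ∑ k : Fin dB, ρ (i, k) (j, k)

/-- Partial trace over the first tensor factor. -/
noncomputable def ptraceA {dA dB : ℕ}
    (ρ : Matrix (Fin dA × Fin dB) (Fin dA × Fin dB) ℂ) : Matrix (Fin dB) (Fin dB) ℂ :=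
  Matrix.of fun i j => ∑ k : Fin dA, ρ (k, i) (k, j)


/-- Matrix square root via the spectral decomposition. -/
noncomputable def matSqrt (A : Matrix ι ι ℂ) : Matrix ι ι ℂ :=
  matFun A Real.sqrt

/-- Quantum fidelity `F[ρ,σ] = (Tr[√(√ρ σ √ρ)])²`. -/
noncomputable def fidelity (ρ σ : Matrix ι ι ℂ) : ℝ :=
  ((matSqrt (matSqrt ρ * σ * matSqrt ρ)).trace.re) ^ 2



section Helpers
open Polynomial Matrix

/-- conjugation by a unitary as an ℝ-algebra hom -/
noncomputable def conjHom (V : Matrix ι ι ℂ) (h1 : V * Vᴴ = 1) (h2 : Vᴴ * V = 1) :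
    Matrix ι ι ℂ →ₐ[ℝ] Matrix ι ι ℂ where
  toFun X := V * X * Vᴴ
  map_one' := by simpa using h1
  map_mul' X Y := by
    show V * (X * Y) * Vᴴ = V * X * Vᴴ * (V * Y * Vᴴ)
    calc V * (X * Y) * Vᴴ = V * X * (Vᴴ * V) * Y * Vᴴ := by rw [h2]; simp [Matrix.mul_assoc]
    _ = V * X * Vᴴ * (V * Y * Vᴴ) := by simp [Matrix.mul_assoc]
  map_zero' := by simp
  map_add' X Y := by simp [Matrix.mul_add, Matrix.add_mul]
  commutes' r := by
    simp only [Algebra.algebraMap_eq_smul_one, Matrix.mul_smul, Matrix.smul_mul, Matrix.mul_one, h1]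

lemma aeval_conj (V : Matrix ι ι ℂ) (h1 : V * Vᴴ = 1) (h2 : Vᴴ * V = 1)
    (X : Matrix ι ι ℂ) (P : ℝ[X]) :
    Polynomial.aeval (V * X * Vᴴ) P = V * Polynomial.aeval X P * Vᴴ :=
  (Polynomial.aeval_algHom_apply (conjHom V h1 h2) X P)

lemma aeval_diag (c : ι → ℂ) (P : ℝ[X]) :
    Polynomial.aeval (Matrix.diagonal c) P
      = Matrix.diagonal (fun i => Polynomial.aeval (c i) P) := by
  have h := Polynomial.aeval_algHom_apply (Matrix.diagonalAlgHom (n := ι) (α := ℂ) ℝ) c P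
  have h2 : (Matrix.diagonalAlgHom (n := ι) (α := ℂ) ℝ) c = Matrix.diagonal c := rfl
  rw [h2] at h
  rw [h]
  have h3 : ∀ i, (Polynomial.aeval c P) i = Polynomial.aeval (c i) P := fun i =>
    (Polynomial.aeval_algHom_apply (Pi.evalAlgHom ℝ (fun _ => ℂ) i) c P).symm
  show Matrix.diagonal (Polynomial.aeval c P) = _
  rw [show (Polynomial.aeval c P) = (fun i => Polynomial.aeval (c i) P) from funext h3]

lemma aeval_coe (x : ℝ) (P : ℝ[X]) :
    Polynomial.aeval (x : ℂ) P = ((P.eval x : ℝ) : ℂ) := by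
  have := Polynomial.aeval_algebraMap_apply ℂ x P
  simpa using this

lemma isHermitian_spec (V : Matrix ι ι ℂ) (d : ι → ℝ) :
    (V * Matrix.diagonal (Complex.ofReal ∘ d) * Vᴴ).IsHermitian := by
  have hd : (Matrix.diagonal (Complex.ofReal ∘ d))ᴴ = Matrix.diagonal (Complex.ofReal ∘ d) := by
    rw [Matrix.diagonal_conjTranspose]
    congr 1
    funext i
    simp [Pi.star_def, Function.comp_def]
  unfold Matrix.IsHermitian
  rw [Matrix.conjTranspose_mul, Matrix.conjTranspose_mul, hd, Matrix.conjTranspose_conjTranspose,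
    Matrix.mul_assoc]

lemma matFun_eq (V : Matrix ι ι ℂ) (h1 : V * Vᴴ = 1) (h2 : Vᴴ * V = 1) (d : ι → ℝ) (f : ℝ → ℝ) :
    matFun (V * Matrix.diagonal (Complex.ofReal ∘ d) * Vᴴ) f
      = V * Matrix.diagonal (Complex.ofReal ∘ f ∘ d) * Vᴴ := by
  classical
  set A := V * Matrix.diagonal (Complex.ofReal ∘ d) * Vᴴ with hAdef
  have hA : A.IsHermitian := isHermitian_spec V d
  rw [matFun, dif_pos hA]
  set μ := hA.eigenvalues with hμ
  set W : Matrix ι ι ℂ := (hA.eigenvectorUnitary : Matrix ι ι ℂ) with hW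
  have hW1 : W * Wᴴ = 1 := by
    rw [← Matrix.star_eq_conjTranspose]
    exact (Matrix.mem_unitaryGroup_iff).mp hA.eigenvectorUnitary.2
  have hW2 : Wᴴ * W = 1 := by
    rw [← Matrix.star_eq_conjTranspose]
    exact (Matrix.mem_unitaryGroup_iff').mp hA.eigenvectorUnitary.2
  set s : Finset ℝ := Finset.image d Finset.univ ∪ Finset.image μ Finset.univ with hs
  set P : ℝ[X] := Lagrange.interpolate s id f with hP
  have hinj : Set.InjOn (id : ℝ → ℝ) s := Function.injective_id.injOn
  have hPval : ∀ x ∈ s, P.eval x = f x := by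
    intro x hx
    have := Lagrange.eval_interpolate_at_node f hinj hx
    exact this
  have key : ∀ (u : Matrix ι ι ℂ), u * uᴴ = 1 → uᴴ * u = 1 → ∀ (c : ι → ℝ), (∀ i, c i ∈ s) →
      u * Matrix.diagonal (Complex.ofReal ∘ f ∘ c) * uᴴ
        = Polynomial.aeval (u * Matrix.diagonal (Complex.ofReal ∘ c) * uᴴ) P := by
    intro u hu1 hu2 c hc
    rw [aeval_conj u hu1 hu2, aeval_diag]
    have hfc : (fun i => Polynomial.aeval ((Complex.ofReal ∘ c) i) P)
        = Complex.ofReal ∘ f ∘ c := by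
      funext i
      rw [Function.comp_apply, aeval_coe, hPval (c i) (hc i)]
      rfl
    rw [hfc]
  have hd : ∀ i, d i ∈ s := fun i => Finset.mem_union_left _ (Finset.mem_image_of_mem d (Finset.mem_univ i))
  have hμs : ∀ i, μ i ∈ s := fun i => Finset.mem_union_right _ (Finset.mem_image_of_mem μ (Finset.mem_univ i))
  have hspec : A = W * Matrix.diagonal (Complex.ofReal ∘ μ) * Wᴴ := by
    have := hA.spectral_theorem
    rw [Unitary.conjStarAlgAut_apply, Matrix.star_eq_conjTranspose] at this
    exact this
  have e1 : Matrix.IsHermitian.cfc hA f = W * Matrix.diagonal (Complex.ofReal ∘ f ∘ μ) * Wᴴ := by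
    rw [Matrix.IsHermitian.cfc]
    rw [Unitary.conjStarAlgAut_apply, Matrix.star_eq_conjTranspose]
    rfl
  rw [e1, key W hW1 hW2 μ hμs, key V h1 h2 d hd, ← hspec, ← hAdef]

lemma conj_mul_conj (V : Matrix ι ι ℂ) (h2 : Vᴴ * V = 1) (X Y : Matrix ι ι ℂ) :
    (V * X * Vᴴ) * (V * Y * Vᴴ) = V * (X * Y) * Vᴴ := by
  calc (V * X * Vᴴ) * (V * Y * Vᴴ) = V * X * (Vᴴ * V) * Y * Vᴴ := by
        simp only [Matrix.mul_assoc]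
    _ = V * (X * Y) * Vᴴ := by rw [h2]; simp only [Matrix.mul_assoc, Matrix.one_mul]

lemma trace_conj (V : Matrix ι ι ℂ) (h2 : Vᴴ * V = 1) (X : Matrix ι ι ℂ) :
    (V * X * Vᴴ).trace = X.trace := by
  rw [Matrix.trace_mul_cycle, h2, Matrix.one_mul]

lemma diag_coe_trace_re (g : ι → ℝ) :
    ((Matrix.diagonal fun i => ((g i : ℝ) : ℂ)).trace).re = ∑ i, g i := by
  rw [Matrix.trace_diagonal]
  rw [show (∑ i, ((g i : ℝ) : ℂ)) = (((∑ i, g i : ℝ)) : ℂ) by push_cast; rfl]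
  exact Complex.ofReal_re _

lemma vnEntropy_spec (V : Matrix ι ι ℂ) (h1 : V * Vᴴ = 1) (h2 : Vᴴ * V = 1) (d : ι → ℝ) :
    vnEntropy (V * Matrix.diagonal (Complex.ofReal ∘ d) * Vᴴ)
      = -∑ i, d i * Real.log (d i) := by
  unfold vnEntropy crossEnt matLog
  rw [matFun_eq V h1 h2, conj_mul_conj V h2, Matrix.diagonal_mul_diagonal, trace_conj V h2]
  congr 1
  rw [show ((fun i => (Complex.ofReal ∘ d) i * (Complex.ofReal ∘ Real.log ∘ d) i))
      = fun i => ((d i * Real.log (d i) : ℝ) : ℂ) by funext i; push_cast; rfl]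
  exact diag_coe_trace_re _

lemma crossEnt_spec (B : Matrix ι ι ℂ) (V : Matrix ι ι ℂ) (h1 : V * Vᴴ = 1) (h2 : Vᴴ * V = 1)
    (d : ι → ℝ) :
    crossEnt B (V * Matrix.diagonal (Complex.ofReal ∘ d) * Vᴴ)
      = -((B * (V * Matrix.diagonal (Complex.ofReal ∘ Real.log ∘ d) * Vᴴ)).trace.re) := by
  unfold crossEnt matLog
  rw [matFun_eq V h1 h2]

/-- Isometry embedding used to express the partial trace as a sum of conjugations. -/
noncomputable def embB {dA dB : ℕ} (k : Fin dB) : Matrix (Fin dA × Fin dB) (Fin dA) ℂ :=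
  Matrix.of fun q i => if q = (i, k) then 1 else 0

lemma ptraceB_eq_sum {dA dB : ℕ} (M : Matrix (Fin dA × Fin dB) (Fin dA × Fin dB) ℂ) :
    ptraceB M = ∑ k : Fin dB, (embB (dA := dA) k)ᴴ * M * embB (dA := dA) k := by
  ext i j
  rw [Matrix.sum_apply]
  show (∑ k : Fin dB, M (i, k) (j, k)) = _
  refine Finset.sum_congr rfl fun k _ => ?_
  have h2 : ((embB (dA := dA) k)ᴴ * M * embB (dA := dA) k) i j
      = ∑ q', ∑ q, star (embB (dA := dA) k q i) * M q q' * embB (dA := dA) k q' j := by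
    rw [Matrix.mul_apply]
    refine Finset.sum_congr rfl fun q' _ => ?_
    rw [Matrix.mul_apply, Finset.sum_mul]
    refine Finset.sum_congr rfl fun q _ => ?_
    rw [Matrix.conjTranspose_apply]
  rw [h2, Finset.sum_eq_single ((j, k))]
  · rw [Finset.sum_eq_single ((i, k))]
    · simp [embB]
    · intro b _ hb
      have : star (embB (dA := dA) k b i) = 0 := by simp [embB, hb]
      simp [this]
    · intro h; exact absurd (Finset.mem_univ _) h
  · intro b _ hb
    have : embB (dA := dA) k b j = 0 := by simp [embB, hb]
    simp [this]
  · intro h; exact absurd (Finset.mem_univ _) h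

lemma ptraceB_posSemidef {dA dB : ℕ} {M : Matrix (Fin dA × Fin dB) (Fin dA × Fin dB) ℂ}
    (hM : M.PosSemidef) : (ptraceB M).PosSemidef := by
  rw [ptraceB_eq_sum]
  refine Finset.sum_induction _ _ (fun a b ha hb => ha.add hb) Matrix.PosSemidef.zero
    fun k _ => hM.conjTranspose_mul_mul_same _

lemma ptraceB_trace {dA dB : ℕ} (M : Matrix (Fin dA × Fin dB) (Fin dA × Fin dB) ℂ) :
    (ptraceB M).trace = M.trace := by
  simp only [Matrix.trace, ptraceB, Matrix.diag, Fintype.sum_prod_type, Matrix.of_apply]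

lemma outer_posSemidef (v : ι → ℂ) : (outer v).PosSemidef := by
  constructor
  · ext i j
    show star (outer v j i) = outer v i j
    simp only [outer, Matrix.vecMulVec_apply, Pi.star_apply, star_mul', star_star]
    ring
  · exact (Matrix.posSemidef_vecMulVec_self_star v).2

lemma trace_outer_eq_one {r : ℕ} (v : Fin r → ι → ℂ) (hv : OrthonormalFam v) (i : Fin r) :
    (outer (v i)).trace = 1 := by
  have h := hv i i
  rw [if_pos rfl] at h
  rw [Matrix.trace]
  calc ∑ a, (outer (v i)).diag a = ∑ a, star (v i a) * v i a :=
        Finset.sum_congr rfl fun a _ => mul_comm _ _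
    _ = 1 := h

/-- Spectral data for a positive semidefinite matrix. -/
lemma spec_data {ρ : Matrix ι ι ℂ} (hρ : ρ.PosSemidef) :
    ∃ (V : Matrix ι ι ℂ) (d : ι → ℝ), (V * Vᴴ = 1) ∧ (Vᴴ * V = 1) ∧
      ρ = V * Matrix.diagonal (Complex.ofReal ∘ d) * Vᴴ ∧ (∀ i, 0 ≤ d i) ∧
      (((∑ i, d i : ℝ) : ℂ) = ρ.trace) := by
  have hH := hρ.1
  refine ⟨(hH.eigenvectorUnitary : Matrix ι ι ℂ), hH.eigenvalues, ?_, ?_, ?_, ?_, ?_⟩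
  · rw [← Matrix.star_eq_conjTranspose]
    exact (Matrix.mem_unitaryGroup_iff).mp hH.eigenvectorUnitary.2
  · rw [← Matrix.star_eq_conjTranspose]
    exact (Matrix.mem_unitaryGroup_iff').mp hH.eigenvectorUnitary.2
  · have := hH.spectral_theorem
    rw [Unitary.conjStarAlgAut_apply, Matrix.star_eq_conjTranspose] at this
    exact this
  · exact fun i => hρ.eigenvalues_nonneg i
  · have hsp := hH.spectral_theorem
    rw [Unitary.conjStarAlgAut_apply, Matrix.star_eq_conjTranspose] at hsp
    have h2 : (Matrix.IsHermitian.eigenvectorUnitary hH : Matrix ι ι ℂ)ᴴ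
        * (Matrix.IsHermitian.eigenvectorUnitary hH : Matrix ι ι ℂ) = 1 := by
      rw [← Matrix.star_eq_conjTranspose]
      exact (Matrix.mem_unitaryGroup_iff').mp hH.eigenvectorUnitary.2
    conv_rhs => rw [hsp]
    rw [trace_conj _ h2, Matrix.trace_diagonal]
    push_cast
    exact Finset.sum_congr rfl fun i _ => rfl

lemma kron_conjT {m n : Type*} [Fintype m] [Fintype n] [DecidableEq m] [DecidableEq n]
    (A : Matrix m m ℂ) (B : Matrix n n ℂ) : (A ⊗ₖ B)ᴴ = Aᴴ ⊗ₖ Bᴴ := by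
  ext x y
  simp only [Matrix.conjTranspose_apply, Matrix.kroneckerMap_apply, star_mul']
  try ring

lemma ptraceB_sum_smul {dA dB : ℕ} {r : ℕ} (w : Fin r → ℂ)
    (M : Fin r → Matrix (Fin dA × Fin dB) (Fin dA × Fin dB) ℂ) :
    ptraceB (∑ i, w i • M i) = ∑ i, w i • ptraceB (M i) := by
  ext x y
  rw [Matrix.sum_apply]
  show (∑ k : Fin dB, (∑ i, w i • M i) (x, k) (y, k)) = _
  simp only [Matrix.sum_apply, Matrix.smul_apply, smul_eq_mul]
  rw [Finset.sum_comm]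
  refine Finset.sum_congr rfl fun i _ => ?_
  rw [← Finset.mul_sum]
  rfl

lemma entropy_split {m n : Type*} [Fintype m] [Fintype n] (a : m → ℝ) (b : n → ℝ)
    (ha : ∀ i, 0 ≤ a i) (hb : ∀ j, 0 ≤ b j) (ha1 : ∑ i, a i = 1) (hb1 : ∑ j, b j = 1) :
    ∑ x : m × n, (a x.1 * b x.2) * Real.log (a x.1 * b x.2)
      = (∑ i, a i * Real.log (a i)) + (∑ j, b j * Real.log (b j)) := by
  have key : ∀ (x : ℝ) (y : ℝ), 0 ≤ x → 0 ≤ y →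
      (x * y) * Real.log (x * y) = (x * Real.log x) * y + x * (y * Real.log y) := by
    intro x y hx hy
    rcases eq_or_lt_of_le hx with h | h
    · simp [← h]
    rcases eq_or_lt_of_le hy with h' | h'
    · simp [← h']
    rw [Real.log_mul h.ne' h'.ne']
    ring
  rw [Fintype.sum_prod_type]
  calc ∑ i, ∑ j, (a i * b j) * Real.log (a i * b j)
      = ∑ i, ∑ j, ((a i * Real.log (a i)) * b j + a i * (b j * Real.log (b j))) :=
        Finset.sum_congr rfl fun i _ => Finset.sum_congr rfl fun j _ => key _ _ (ha i) (hb j)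
    _ = ∑ i, ((a i * Real.log (a i)) * (∑ j, b j) + a i * (∑ j, b j * Real.log (b j))) := by
        refine Finset.sum_congr rfl fun i _ => ?_
        rw [Finset.sum_add_distrib, ← Finset.mul_sum, ← Finset.mul_sum]
    _ = (∑ i, a i * Real.log (a i)) + (∑ j, b j * Real.log (b j)) := by
        rw [hb1]
        rw [Finset.sum_add_distrib]
        simp only [mul_one]
        rw [← Finset.sum_mul, ha1, one_mul]

lemma mixture_spec {r : ℕ} (p : Fin r → ℝ) (hp : ∀ i, 0 ≤ p i) (v : Fin r → ι → ℂ)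
    (hv : OrthonormalFam v) :
    ∃ (W : Matrix ι ι ℂ) (q : ι → ℝ), W * Wᴴ = 1 ∧ Wᴴ * W = 1 ∧
      (∑ i, (p i : ℂ) • outer (v i)) = W * Matrix.diagonal (Complex.ofReal ∘ q) * Wᴴ ∧
      (∀ x, 0 ≤ q x) ∧
      (∀ g : ℝ → ℝ, g 0 = 0 → ∑ x, g (q x) = ∑ i, g (p i)) := by
  classical
  set E := EuclideanSpace ℂ ι
  let vE : Fin r → E := fun i => (WithLp.equiv 2 (ι → ℂ)).symm (v i)
  have hvE : ∀ i a, vE i a = v i a := fun i a => rfl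
  have hON : Orthonormal ℂ vE := by
    rw [orthonormal_iff_ite]
    intro i j
    have h := hv i j
    calc inner ℂ (vE i) (vE j) = ∑ a, star (v i a) * v j a := by
          rw [PiLp.inner_apply]
          refine Finset.sum_congr rfl fun a _ => ?_
          rw [RCLike.inner_apply']; rfl
      _ = if i = j then (1 : ℂ) else 0 := h
  have hcard : r ≤ Fintype.card ι := by
    have h1 := hON.linearIndependent.fintype_card_le_finrank
    rwa [Fintype.card_fin, finrank_euclideanSpace] at h1
  obtain ⟨e⟩ : Nonempty (Fin r ↪ ι) :=
    Function.Embedding.nonempty_of_card_le (by rwa [Fintype.card_fin])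
  let v' : ι → E := fun x => if h : ∃ i, e i = x then vE h.choose else 0
  have hch : ∀ i : Fin r, (show ∃ j, e j = e i from ⟨i, rfl⟩).choose = i := fun i =>
    e.injective (show ∃ j, e j = e i from ⟨i, rfl⟩).choose_spec
  have hv'e : ∀ i, v' (e i) = vE i := by
    intro i
    show (if h : ∃ j, e j = e i then vE h.choose else 0) = vE i
    rw [dif_pos ⟨i, rfl⟩, hch i]
  have hres : Orthonormal ℂ ((Set.range e).restrict v') := by
    rw [orthonormal_iff_ite]
    rintro ⟨x, i, hi⟩ ⟨y, j, hj⟩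
    have hx : (Set.range e).restrict v' ⟨x, ⟨i, hi⟩⟩ = vE i := by
      show v' x = vE i; rw [← hi, hv'e]
    have hy : (Set.range e).restrict v' ⟨y, ⟨j, hj⟩⟩ = vE j := by
      show v' y = vE j; rw [← hj, hv'e]
    rw [hx, hy, orthonormal_iff_ite.mp hON i j]
    rcases eq_or_ne i j with h | h
    · have hxy : x = y := by rw [← hi, ← hj, h]
      simp [Subtype.ext_iff, hxy, h]
    · have hxy : x ≠ y := fun hc => h (e.injective (by rw [hi, hj]; exact hc))
      simp [Subtype.ext_iff, hxy, h]
  obtain ⟨b, hb⟩ := hres.exists_orthonormalBasis_extension_of_card_eq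
    (by rw [finrank_euclideanSpace])
  have hbe : ∀ i : Fin r, b (e i) = vE i := fun i => (hb (e i) ⟨i, rfl⟩).trans (hv'e i)
  refine ⟨Matrix.of fun j x => b x j, fun x => if h : ∃ i, e i = x then p h.choose else 0,
    ?_, ?_, ?_, ?_, ?_⟩
  case refine_2 =>
    ext x y
    rw [Matrix.mul_apply, Matrix.one_apply]
    calc ∑ j, (Matrix.of fun j x => b x j)ᴴ x j * (Matrix.of fun j x => b x j) j y
        = ∑ j, star (b x j) * b y j := by
          refine Finset.sum_congr rfl fun j _ => ?_
          rw [Matrix.conjTranspose_apply]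
          rfl
      _ = inner ℂ (b x) (b y) := by
          rw [PiLp.inner_apply]
          refine Finset.sum_congr rfl fun j _ => by rw [RCLike.inner_apply']; rfl
      _ = if x = y then 1 else 0 := orthonormal_iff_ite.mp b.orthonormal x y
  case refine_1 =>
    have h2 : (Matrix.of fun j x => b x j)ᴴ * (Matrix.of fun j x => b x j) = 1 := by
      ext x y
      rw [Matrix.mul_apply, Matrix.one_apply]
      calc ∑ j, (Matrix.of fun j x => b x j)ᴴ x j * (Matrix.of fun j x => b x j) j y
          = ∑ j, star (b x j) * b y j := by
            refine Finset.sum_congr rfl fun j _ => ?_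
            rw [Matrix.conjTranspose_apply]
            rfl
        _ = inner ℂ (b x) (b y) := by
            rw [PiLp.inner_apply]
            refine Finset.sum_congr rfl fun j _ => by rw [RCLike.inner_apply']; rfl
        _ = if x = y then 1 else 0 := orthonormal_iff_ite.mp b.orthonormal x y
    exact mul_eq_one_comm.mpr h2
  case refine_4 =>
    intro x
    show (0:ℝ) ≤ if h : ∃ i, e i = x then p h.choose else 0
    by_cases h : ∃ i, e i = x
    · rw [dif_pos h]; exact hp _
    · rw [dif_neg h]
  case refine_5 =>
    intro g hg0
    set q : ι → ℝ := fun x => if h : ∃ i, e i = x then p h.choose else 0 with hqdef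
    have hoff : ∀ x ∈ Finset.univ, x ∉ Finset.univ.map e → g (q x) = 0 := by
      intro x _ hx
      have : ¬ ∃ i, e i = x := by
        intro ⟨i, hi⟩
        exact hx (Finset.mem_map.mpr ⟨i, Finset.mem_univ i, hi⟩)
      rw [hqdef]
      simp only [dif_neg this]
      exact hg0
    calc ∑ x, g (q x) = ∑ x ∈ Finset.univ.map e, g (q x) :=
          (Finset.sum_subset (Finset.subset_univ _) hoff).symm
      _ = ∑ i, g (q (e i)) := Finset.sum_map _ _ _
      _ = ∑ i, g (p i) := by
          refine Finset.sum_congr rfl fun i _ => ?_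
          congr 1
          show (if h : ∃ j, e j = e i then p h.choose else 0) = p i
          rw [dif_pos ⟨i, rfl⟩, hch i]
  case refine_3 =>
    set q : ι → ℝ := fun x => if h : ∃ i, e i = x then p h.choose else 0 with hqdef
    ext j k
    have hRHS : (Matrix.of (fun j x => b x j) * Matrix.diagonal (Complex.ofReal ∘ q)
        * (Matrix.of fun j x => b x j)ᴴ) j k
        = ∑ x, b x j * ((q x : ℝ) : ℂ) * star (b x k) := by
      rw [Matrix.mul_apply]
      refine Finset.sum_congr rfl fun x _ => ?_
      rw [Matrix.mul_diagonal, Matrix.conjTranspose_apply]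
      rfl
    have hoff : ∀ x ∈ Finset.univ, x ∉ Finset.univ.map e →
        b x j * ((q x : ℝ) : ℂ) * star (b x k) = 0 := by
      intro x _ hx
      have : ¬ ∃ i, e i = x := by
        intro ⟨i, hi⟩
        exact hx (Finset.mem_map.mpr ⟨i, Finset.mem_univ i, hi⟩)
      rw [hqdef]
      simp only [dif_neg this]
      simp
    have hLHS : (∑ i, (p i : ℂ) • outer (v i)) j k = ∑ i, (p i : ℂ) * (v i j * star (v i k)) := by
      rw [Matrix.sum_apply]
      refine Finset.sum_congr rfl fun i _ => ?_
      rw [Matrix.smul_apply]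
      rfl
    rw [hRHS, hLHS]
    rw [show (∑ x, b x j * ((q x : ℝ) : ℂ) * star (b x k))
        = ∑ x ∈ Finset.univ.map e, b x j * ((q x : ℝ) : ℂ) * star (b x k) from
      (Finset.sum_subset (Finset.subset_univ _) hoff).symm]
    rw [Finset.sum_map]
    refine Finset.sum_congr rfl fun i _ => ?_
    have hq : q (e i) = p i := by
      show (if h : ∃ j, e j = e i then p h.choose else 0) = p i
      rw [dif_pos ⟨i, rfl⟩, hch i]
    have hbj : b (e i) j = v i j := by rw [hbe i]; rfl
    have hbk : b (e i) k = v i k := by rw [hbe i]; rfl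
    show ((p i : ℝ) : ℂ) * (v i j * star (v i k))
        = b (e i) j * ((q (e i) : ℝ) : ℂ) * star (b (e i) k)
    rw [hq, hbj, hbk]
    ring

end Helpers

open Matrix

/-- **Eq. (28)** (Entropic disturbance bound in the quantum autoencoder).
`Δχ ≤ ∑ i, pᵢ S(ρ_A⁽ⁱ⁾) + ln(∑ i, e^{-C(ρ_A⁽ⁱ⁾, ρ_A)})`. -/
theorem qae_entropic_disturbance_bound
    {dA dB r : ℕ}
    (U : Matrix (Fin dA × Fin dB) (Fin dA × Fin dB) ℂ)
    (hU : U * U.conjTranspose = 1 ∧ U.conjTranspose * U = 1)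
    (ρB : Matrix (Fin dB) (Fin dB) ℂ) (hρB : IsDensityMatrix ρB)
    (p : Fin r → ℝ) (hp : ∀ i, 0 < p i) (hp1 : ∑ i, p i = 1)
    (v : Fin r → (Fin dA × Fin dB) → ℂ) (hv : OrthonormalFam v)
    (ρin : Matrix (Fin dA × Fin dB) (Fin dA × Fin dB) ℂ)
    (hρin : ρin = ∑ i, (p i : ℂ) • outer (v i))
    (ρA : Matrix (Fin dA) (Fin dA) ℂ) (hρA : ρA = ptraceB (U * ρin * U.conjTranspose))
    (ρAi : Fin r → Matrix (Fin dA) (Fin dA) ℂ)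
    (hρAi : ∀ i, ρAi i = ptraceB (U * outer (v i) * U.conjTranspose))
    (ρout : Matrix (Fin dA × Fin dB) (Fin dA × Fin dB) ℂ)
    (hρout : ρout = U.conjTranspose * (ρA ⊗ₖ ρB) * U)
    (Φi : Fin r → Matrix (Fin dA × Fin dB) (Fin dA × Fin dB) ℂ)
    (hΦi : ∀ i, Φi i = U.conjTranspose * ((ρAi i) ⊗ₖ ρB) * U)
    (Δχ : ℝ)
    (hΔχ : Δχ = vnEntropy ρin - (vnEntropy ρout - ∑ i, p i * vnEntropy (Φi i))) :
    Δχ ≤ ∑ i, p i * vnEntropy (ρAi i)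
          + Real.log (∑ i, Real.exp (-(crossEnt (ρAi i) ρA))) := by
  classical
  obtain ⟨hU1, hU2⟩ := hU
  obtain ⟨W, q, hW1, hW2, hWspec, hq0, hqsum⟩ := mixture_spec p (fun i => (hp i).le) v hv
  have hρin' : ρin = W * Matrix.diagonal (Complex.ofReal ∘ q) * Wᴴ := hρin.trans hWspec
  have hSin : vnEntropy ρin = -∑ i, p i * Real.log (p i) := by
    rw [hρin', vnEntropy_spec W hW1 hW2 q, hqsum (fun x => x * Real.log x) (by simp)]
  have hdiagPSD : (Matrix.diagonal (Complex.ofReal ∘ q)).PosSemidef := by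
    rw [Matrix.posSemidef_diagonal_iff]
    intro i
    simpa using hq0 i
  have hρinPSD : ρin.PosSemidef := by
    rw [hρin']; exact hdiagPSD.mul_mul_conjTranspose_same W
  have hρin_trace : ρin.trace = 1 := by
    rw [hρin', trace_conj W hW2, Matrix.trace_diagonal]
    have hsumq : ∑ x, q x = 1 := by rw [hqsum (fun x => x) rfl, hp1]
    calc ∑ i, (Complex.ofReal ∘ q) i = ((∑ i, q i : ℝ) : ℂ) := by push_cast; rfl
      _ = 1 := by rw [hsumq]; norm_num
  -- ρA facts
  have hρAPSD : ρA.PosSemidef := by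
    rw [hρA]; exact ptraceB_posSemidef (hρinPSD.mul_mul_conjTranspose_same U)
  have hρA_tr : ρA.trace = 1 := by
    rw [hρA, ptraceB_trace, trace_conj U hU2, hρin_trace]
  obtain ⟨V, a, hV1, hV2, hVspec, ha0, haTr⟩ := spec_data hρAPSD
  have haSum : ∑ x, a x = 1 := by
    have h := haTr.trans hρA_tr
    exact_mod_cast h
  -- ρAi facts
  have hρAiPSD : ∀ i, (ρAi i).PosSemidef := fun i => by
    rw [hρAi i]
    exact ptraceB_posSemidef ((outer_posSemidef (v i)).mul_mul_conjTranspose_same U)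
  have hρAi_tr : ∀ i, (ρAi i).trace = 1 := fun i => by
    rw [hρAi i, ptraceB_trace, trace_conj U hU2, trace_outer_eq_one v hv i]
  choose Vi ai hVi1 hVi2 hVispec hai0 haiTr using fun i => spec_data (hρAiPSD i)
  have haiSum : ∀ i, ∑ x, ai i x = 1 := fun i => by
    have h := (haiTr i).trans (hρAi_tr i)
    exact_mod_cast h
  -- ρB facts
  obtain ⟨Wb, bb, hB1, hB2, hBspec, hb0, hbTr⟩ := spec_data hρB.1
  have hbSum : ∑ x, bb x = 1 := by
    have h := hbTr.trans hρB.2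
    exact_mod_cast h
  -- tensor spectral data
  have tensorSpec : ∀ (X : Matrix (Fin dA) (Fin dA) ℂ) (VX : Matrix (Fin dA) (Fin dA) ℂ)
      (aX : Fin dA → ℝ), VX * VXᴴ = 1 → VXᴴ * VX = 1 →
      X = VX * Matrix.diagonal (Complex.ofReal ∘ aX) * VXᴴ →
      ∃ K : Matrix (Fin dA × Fin dB) (Fin dA × Fin dB) ℂ,
        K * Kᴴ = 1 ∧ Kᴴ * K = 1 ∧
        Uᴴ * (X ⊗ₖ ρB) * U
          = K * Matrix.diagonal
              (Complex.ofReal ∘ fun x : Fin dA × Fin dB => aX x.1 * bb x.2) * Kᴴ := by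
    intro X VX aX h1 h2 hXspec
    have hkron1 : (VX ⊗ₖ Wb) * (VX ⊗ₖ Wb)ᴴ = 1 := by
      rw [kron_conjT, ← Matrix.mul_kronecker_mul, h1, hB1, Matrix.one_kronecker_one]
    have hkron2 : (VX ⊗ₖ Wb)ᴴ * (VX ⊗ₖ Wb) = 1 := by
      rw [kron_conjT, ← Matrix.mul_kronecker_mul, h2, hB2, Matrix.one_kronecker_one]
    refine ⟨Uᴴ * (VX ⊗ₖ Wb), ?_, ?_, ?_⟩
    · calc Uᴴ * (VX ⊗ₖ Wb) * (Uᴴ * (VX ⊗ₖ Wb))ᴴ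
          = Uᴴ * ((VX ⊗ₖ Wb) * (VX ⊗ₖ Wb)ᴴ) * U := by
            rw [Matrix.conjTranspose_mul, Matrix.conjTranspose_conjTranspose]
            simp only [Matrix.mul_assoc]
        _ = 1 := by rw [hkron1, Matrix.mul_one, hU2]
    · calc (Uᴴ * (VX ⊗ₖ Wb))ᴴ * (Uᴴ * (VX ⊗ₖ Wb))
          = (VX ⊗ₖ Wb)ᴴ * (U * Uᴴ) * (VX ⊗ₖ Wb) := by
            rw [Matrix.conjTranspose_mul, Matrix.conjTranspose_conjTranspose]
            simp only [Matrix.mul_assoc]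
        _ = 1 := by rw [hU1, Matrix.mul_one, hkron2]
    · have hdd : (Matrix.diagonal (Complex.ofReal ∘ aX)) ⊗ₖ (Matrix.diagonal (Complex.ofReal ∘ bb))
          = Matrix.diagonal (Complex.ofReal ∘ fun x : Fin dA × Fin dB => aX x.1 * bb x.2) := by
        rw [Matrix.diagonal_kronecker_diagonal]
        refine congrArg Matrix.diagonal (funext fun x => ?_)
        show ((aX x.1 : ℝ) : ℂ) * ((bb x.2 : ℝ) : ℂ) = ((aX x.1 * bb x.2 : ℝ) : ℂ)
        push_cast
        ring
      have hX : X ⊗ₖ ρB = (VX ⊗ₖ Wb)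
          * Matrix.diagonal (Complex.ofReal ∘ fun x : Fin dA × Fin dB => aX x.1 * bb x.2)
          * (VX ⊗ₖ Wb)ᴴ := by
        rw [hXspec, hBspec, ← hdd, kron_conjT]
        rw [← Matrix.mul_kronecker_mul, ← Matrix.mul_kronecker_mul]
      rw [hX, Matrix.conjTranspose_mul, Matrix.conjTranspose_conjTranspose]
      simp only [Matrix.mul_assoc]
  -- entropy of ρout
  obtain ⟨K, hK1, hK2, hKspec⟩ := tensorSpec ρA V a hV1 hV2 hVspec
  have hSout : vnEntropy ρout
      = (-∑ x, a x * Real.log (a x)) + (-∑ x, bb x * Real.log (bb x)) := by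
    rw [hρout, hKspec, vnEntropy_spec K hK1 hK2]
    have h := entropy_split a bb ha0 hb0 haSum hbSum
    rw [show (∑ x : Fin dA × Fin dB,
        (fun x : Fin dA × Fin dB => a x.1 * bb x.2) x
          * Real.log ((fun x : Fin dA × Fin dB => a x.1 * bb x.2) x))
        = ∑ x : Fin dA × Fin dB, (a x.1 * bb x.2) * Real.log (a x.1 * bb x.2) from rfl, h]
    ring
  -- entropy of Φi
  have hSPhi : ∀ i, vnEntropy (Φi i)
      = vnEntropy (ρAi i) + (-∑ x, bb x * Real.log (bb x)) := by
    intro i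
    obtain ⟨K', hK'1, hK'2, hK'spec⟩ :=
      tensorSpec (ρAi i) (Vi i) (ai i) (hVi1 i) (hVi2 i) (hVispec i)
    rw [hΦi i, hK'spec, vnEntropy_spec K' hK'1 hK'2]
    have h := entropy_split (ai i) bb (hai0 i) hb0 (haiSum i) hbSum
    rw [show (∑ x : Fin dA × Fin dB,
        (fun x : Fin dA × Fin dB => ai i x.1 * bb x.2) x
          * Real.log ((fun x : Fin dA × Fin dB => ai i x.1 * bb x.2) x))
        = ∑ x : Fin dA × Fin dB, (ai i x.1 * bb x.2) * Real.log (ai i x.1 * bb x.2) from rfl, h]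
    have h2 : vnEntropy (ρAi i) = -∑ x, ai i x * Real.log (ai i x) := by
      rw [hVispec i, vnEntropy_spec (Vi i) (hVi1 i) (hVi2 i)]
    rw [h2]
    ring
  -- cross entropies
  set L := V * Matrix.diagonal (Complex.ofReal ∘ Real.log ∘ a) * Vᴴ with hL
  have hmatlogA : matLog ρA = L := by
    rw [hVspec]
    exact matFun_eq V hV1 hV2 a Real.log
  have hcrossL : ∀ B : Matrix (Fin dA) (Fin dA) ℂ, crossEnt B ρA = -((B * L).trace.re) := by
    intro B
    unfold crossEnt
    rw [hmatlogA]
  have hSA : vnEntropy ρA = -∑ x, a x * Real.log (a x) := by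
    rw [hVspec, vnEntropy_spec V hV1 hV2]
  have htrA : (ρA * L).trace.re = ∑ x, a x * Real.log (a x) := by
    have h1 : vnEntropy ρA = -((ρA * L).trace.re) := hcrossL ρA
    rw [hSA] at h1
    linarith
  have hsum_rhoAi : ∑ i, (p i : ℂ) • ρAi i = ρA := by
    rw [hρA, hρin]
    rw [show U * (∑ i, (p i : ℂ) • outer (v i)) * Uᴴ
        = ∑ i, (p i : ℂ) • (U * outer (v i) * Uᴴ) by
      rw [Matrix.mul_sum, Matrix.sum_mul]
      refine Finset.sum_congr rfl fun i _ => ?_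
      rw [Matrix.mul_smul, Matrix.smul_mul]]
    rw [ptraceB_sum_smul]
    exact Finset.sum_congr rfl fun i _ => by rw [hρAi i]
  have htrace_split : (ρA * L).trace = ∑ i, (p i : ℂ) * ((ρAi i) * L).trace := by
    rw [← hsum_rhoAi, Matrix.sum_mul]
    rw [show (∑ i, ((p i : ℂ) • ρAi i) * L) = ∑ i, (p i : ℂ) • (ρAi i * L) from
      Finset.sum_congr rfl fun i _ => Matrix.smul_mul _ _ _]
    rw [Matrix.trace_sum]
    exact Finset.sum_congr rfl fun i _ => Matrix.trace_smul _ _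
  have hpc : ∑ i, p i * crossEnt (ρAi i) ρA = -∑ x, a x * Real.log (a x) := by
    have hre : (ρA * L).trace.re = ∑ i, p i * ((ρAi i) * L).trace.re := by
      rw [htrace_split, Complex.re_sum]
      refine Finset.sum_congr rfl fun i _ => ?_
      rw [Complex.mul_re, Complex.ofReal_re, Complex.ofReal_im]
      ring
    calc ∑ i, p i * crossEnt (ρAi i) ρA
        = ∑ i, p i * (-(((ρAi i) * L).trace.re)) :=
          Finset.sum_congr rfl fun i _ => by rw [hcrossL (ρAi i)]
      _ = -∑ i, p i * ((ρAi i) * L).trace.re := by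
          rw [← Finset.sum_neg_distrib]
          exact Finset.sum_congr rfl fun i _ => by ring
      _ = -∑ x, a x * Real.log (a x) := by rw [← hre, htrA]
  -- Jensen
  set c : Fin r → ℝ := fun i => crossEnt (ρAi i) ρA with hc
  have hjen : (-∑ i, p i * Real.log (p i)) + (-∑ i, p i * c i)
      ≤ Real.log (∑ i, Real.exp (-(c i))) := by
    set g : Fin r → ℝ := fun i => Real.exp (-(c i)) / p i with hg
    have hgpos : ∀ i, 0 < g i := fun i => div_pos (Real.exp_pos _) (hp i)
    have hconc := strictConcaveOn_log_Ioi.concaveOn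
    have h := hconc.le_map_sum (t := Finset.univ) (w := p) (p := g)
      (fun i _ => (hp i).le) hp1 (fun i _ => Set.mem_Ioi.mpr (hgpos i))
    have hpg : ∀ i, p i • g i = Real.exp (-(c i)) := fun i => by
      rw [smul_eq_mul, hg, mul_comm, div_mul_cancel₀ _ (hp i).ne']
    have hlogg : ∀ i, Real.log (g i) = -(c i) - Real.log (p i) := fun i => by
      rw [hg]
      show Real.log (Real.exp (-(c i)) / p i) = _
      rw [Real.log_div (Real.exp_ne_zero _) (hp i).ne', Real.log_exp]
    have hLHS : ∑ i, p i • Real.log (g i)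
        = (-∑ i, p i * c i) + (-∑ i, p i * Real.log (p i)) := by
      rw [show (∑ i, p i • Real.log (g i))
          = ∑ i, (-(p i * c i) + -(p i * Real.log (p i))) from
        Finset.sum_congr rfl fun i _ => by rw [smul_eq_mul, hlogg i]; ring]
      rw [Finset.sum_add_distrib, Finset.sum_neg_distrib, Finset.sum_neg_distrib]
    have hRHS : (∑ i, p i • g i) = ∑ i, Real.exp (-(c i)) :=
      Finset.sum_congr rfl fun i _ => hpg i
    rw [hLHS, hRHS] at h
    linarith
  -- final assembly
  have hsplit : ∑ i, p i * vnEntropy (Φi i)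
      = (∑ i, p i * vnEntropy (ρAi i)) + (-∑ x, bb x * Real.log (bb x)) := by
    rw [show (∑ i, p i * vnEntropy (Φi i))
        = ∑ i, (p i * vnEntropy (ρAi i) + p i * (-∑ x, bb x * Real.log (bb x))) from
      Finset.sum_congr rfl fun i _ => by rw [hSPhi i]; ring]
    rw [Finset.sum_add_distrib, ← Finset.sum_mul, hp1, one_mul]
  have hpcc : ∑ i, p i * c i = -∑ x, a x * Real.log (a x) := hpc
  rw [hΔχ, hSin, hSout, hsplit]
  have hgoal : ∀ i, Real.exp (-(crossEnt (ρAi i) ρA)) = Real.exp (-(c i)) := fun i => rfl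
  rw [show (∑ i, Real.exp (-(crossEnt (ρAi i) ρA))) = ∑ i, Real.exp (-(c i)) from
    Finset.sum_congr rfl fun i _ => hgoal i]
  linarith [hjen]

end QCE
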